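/- Let A ∈ (ℝ ∪ {−∞})^{n×n} have spectral radius λ > −∞, let q ∈ ℝⁿ be a regular vector, let p ∈ (ℝ ∪ {−∞})ⁿ, and let c ∈ ℝ ∪ {−∞}. Set μ = λ ⊕ ⊕_{m=1}^{n} (q⁻ A^{m−1} p)^{1/(m+1)} ⊕ c. Then the minimum of x⁻ A x ⊕ x⁻ p ⊕ q⁻ x ⊕ c over all regular vectors x ∈ ℝⁿ equals μ, and a regular vector x attains this minimum if and only if x = (μ⁻¹ A)* u for some vector u with μ⁻¹ p ≤ u ≤ μ (q⁻ (μ⁻¹ A)*)⁻, where μ⁻¹ = −μ. -/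

import Mathlib

open Finset

noncomputable section

namespace MaxPlus

/-- Max-plus multiplicative inverse: `-a` for real `a`, `⊥` for `⊥`. -/
def tinv (a : WithBot ℝ) : WithBot ℝ := WithBot.map (fun r => -r) a

/-- Max-plus rational power `a^(1/k) = a / k`. -/
def trt (a : WithBot ℝ) (k : ℕ) : WithBot ℝ := WithBot.map (fun r => r / (k : ℝ)) a

/-- A vector is regular if it has no `⊥` (= -∞) entries. -/
def Reg {n : ℕ} (x : Fin n → WithBot ℝ) : Prop := ∀ i, x i ≠ ⊥

/-- `cdot q x = q⁻ x`, the max-plus product of the conjugate row vector `q⁻` with `x`. -/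
def cdot {n : ℕ} (q x : Fin n → WithBot ℝ) : WithBot ℝ :=
  Finset.univ.sup fun i => tinv (q i) + x i

/-- Max-plus matrix-vector product. -/
def mulVec {m n : ℕ} (A : Matrix (Fin m) (Fin n) (WithBot ℝ)) (x : Fin n → WithBot ℝ) :
    Fin m → WithBot ℝ := fun i => Finset.univ.sup fun j => A i j + x j

/-- Max-plus matrix product. -/
def tmul {l m n : ℕ} (A : Matrix (Fin l) (Fin m) (WithBot ℝ))
    (B : Matrix (Fin m) (Fin n) (WithBot ℝ)) : Matrix (Fin l) (Fin n) (WithBot ℝ) :=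
  fun i j => Finset.univ.sup fun k => A i k + B k j

/-- Multiplicative conjugate transpose of a matrix. -/
def conjM {m n : ℕ} (A : Matrix (Fin m) (Fin n) (WithBot ℝ)) :
    Matrix (Fin n) (Fin m) (WithBot ℝ) := fun i j => tinv (A j i)

/-- Max-plus identity matrix. -/
def tId {n : ℕ} : Matrix (Fin n) (Fin n) (WithBot ℝ) := fun i j => if i = j then 0 else ⊥

/-- Max-plus matrix power. -/
def tpow {n : ℕ} (A : Matrix (Fin n) (Fin n) (WithBot ℝ)) : ℕ → Matrix (Fin n) (Fin n) (WithBot ℝ)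
  | 0 => tId
  | k + 1 => tmul A (tpow A k)

/-- Max-plus trace. -/
def ttr {n : ℕ} (A : Matrix (Fin n) (Fin n) (WithBot ℝ)) : WithBot ℝ :=
  Finset.univ.sup fun i => A i i

/-- `Tr(A) = tr A ⊕ tr A² ⊕ ⋯ ⊕ tr Aⁿ`. -/
def TrOp {n : ℕ} (A : Matrix (Fin n) (Fin n) (WithBot ℝ)) : WithBot ℝ :=
  (Finset.Icc 1 n).sup fun m => ttr (tpow A m)

/-- Kleene star `A* = I ⊕ A ⊕ ⋯ ⊕ A^(n-1)`. -/
def kstar {n : ℕ} (A : Matrix (Fin n) (Fin n) (WithBot ℝ)) : Matrix (Fin n) (Fin n) (WithBot ℝ) :=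
  fun i j => (Finset.range n).sup fun k => tpow A k i j

/-- Max-plus spectral radius `λ = ⊕_{m=1}^n (tr A^m)^(1/m)`. -/
def specRad {n : ℕ} (A : Matrix (Fin n) (Fin n) (WithBot ℝ)) : WithBot ℝ :=
  (Finset.Icc 1 n).sup fun m => trt (ttr (tpow A m)) m

/-- `prodAB A B [i₁, …, i_k] = A B^{i₁} A B^{i₂} ⋯ A B^{i_k}`. -/
def prodAB {n : ℕ} (A B : Matrix (Fin n) (Fin n) (WithBot ℝ)) :
    List ℕ → Matrix (Fin n) (Fin n) (WithBot ℝ)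
  | [] => tId
  | i :: t => tmul (tmul A (tpow B i)) (prodAB A B t)

/-- The all-ones (all-`𝟙 = 0`) vector. -/
def onesV (n : ℕ) : Fin n → WithBot ℝ := fun _ => 0

end MaxPlus

open MaxPlus
namespace Aux
open MaxPlus
abbrev R := WithBot ℝ

lemma add_sup' (a b c : R) : a + (b ⊔ c) = (a + b) ⊔ (a + c) := by
  rcases le_total b c with h | h
  · rw [sup_eq_right.2 h, sup_eq_right.2 (add_le_add_right h a)]
  · rw [sup_eq_left.2 h, sup_eq_left.2 (add_le_add_right h a)]

lemma sup_add' (a b c : R) : (b ⊔ c) + a = (b + a) ⊔ (c + a) := by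
  rw [add_comm, add_sup', add_comm a b, add_comm a c]

lemma add_finsup {ι} (s : Finset ι) (f : ι → R) (a : R) :
    a + s.sup f = s.sup fun i => a + f i := by
  induction s using Finset.cons_induction with
  | empty => simp [WithBot.add_bot]
  | cons i s hi ih => rw [Finset.sup_cons, Finset.sup_cons, add_sup', ih]

lemma finsup_add {ι} (s : Finset ι) (f : ι → R) (a : R) :
    s.sup f + a = s.sup fun i => f i + a := by
  rw [add_comm, add_finsup]; simp [add_comm]

lemma sup_univ_equiv {α β : Type*} [Fintype α] [Fintype β] (e : α ≃ β) (g : β → R) :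
    (univ : Finset α).sup (fun a => g (e a)) = (univ : Finset β).sup g := by
  apply le_antisymm
  · exact Finset.sup_le fun a _ => Finset.le_sup (mem_univ (e a))
  · refine Finset.sup_le fun b _ => ?_
    have := Finset.le_sup (f := fun a => g (e a)) (mem_univ (e.symm b))
    simpa using this

lemma coe_nsmul (m : ℕ) (r : ℝ) : (m • (r : R)) = ((m • r : ℝ) : R) := by
  induction m with
  | zero => simp
  | succ k ih => rw [succ_nsmul, succ_nsmul, ih, ← WithBot.coe_add]

-- ### basic matrix/vector lemmas
variable {n : ℕ}

lemma mulVec_tmul (A B : Matrix (Fin n) (Fin n) R) (x : Fin n → R) :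
    mulVec (tmul A B) x = fun i => mulVec A (mulVec B x) i := by
  funext i
  simp only [mulVec, tmul]
  calc (univ.sup fun j => (univ.sup fun k => A i k + B k j) + x j)
      = univ.sup (fun j => univ.sup fun k => A i k + B k j + x j) := by
        refine Finset.sup_congr rfl fun j _ => ?_
        rw [finsup_add]
    _ = univ.sup (fun k => univ.sup fun j => A i k + B k j + x j) := Finset.sup_comm _ _ _
    _ = univ.sup (fun k => A i k + univ.sup fun j => B k j + x j) := by
        refine Finset.sup_congr rfl fun k _ => ?_
        rw [add_finsup]
        exact Finset.sup_congr rfl fun j _ => by rw [add_assoc]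

lemma mulVec_tId (x : Fin n → R) : mulVec tId x = x := by
  funext i
  apply le_antisymm
  · refine Finset.sup_le fun j _ => ?_
    by_cases h : i = j
    · subst h; simp [tId]
    · simp [tId, h, WithBot.bot_add]
  · have := Finset.le_sup (f := fun j => tId i j + x j) (mem_univ i)
    refine le_trans ?_ this
    simp [tId]

lemma mulVec_mono {A : Matrix (Fin n) (Fin n) R} {x y : Fin n → R} (h : ∀ j, x j ≤ y j) :
    ∀ i, mulVec A x i ≤ mulVec A y i := fun i =>
  Finset.sup_mono_fun fun j _ => add_le_add_right (h j) _

lemma mulVec_monoM {A B : Matrix (Fin n) (Fin n) R} (h : ∀ i j, A i j ≤ B i j)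
    (x : Fin n → R) : ∀ i, mulVec A x i ≤ mulVec B x i := fun i =>
  Finset.sup_mono_fun fun j _ => add_le_add_left (h i j) _

lemma cdot_mono {q x y : Fin n → R} (h : ∀ i, x i ≤ y i) : cdot q x ≤ cdot q y :=
  Finset.sup_mono_fun fun i _ => add_le_add_right (h i) _

lemma le_cdot (q x : Fin n → R) (i : Fin n) : tinv (q i) + x i ≤ cdot q x :=
  Finset.le_sup (f := fun i => tinv (q i) + x i) (mem_univ i)

lemma reg_coe {x : Fin n → R} (hx : Reg x) (i : Fin n) : ∃ r : ℝ, x i = (r : R) := by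
  have := hx i
  cases h : x i with
  | none => exact absurd h this
  | some r => exact ⟨r, rfl⟩

lemma tinv_add_self {a : R} (ha : a ≠ ⊥) : tinv a + a = 0 := by
  cases a with
  | none => exact absurd rfl ha
  | some r => show ((-r : ℝ) : R) + (r : R) = 0
              rw [← WithBot.coe_add]; norm_num

lemma self_add_tinv {a : R} (ha : a ≠ ⊥) : a + tinv a = 0 := by
  rw [add_comm]; exact tinv_add_self ha

lemma cdot_self {x : Fin n → R} (hn : 0 < n) (hx : Reg x) : cdot x x = 0 := by
  have : ∀ i : Fin n, tinv (x i) + x i = 0 := fun i => tinv_add_self (hx i)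
  unfold cdot
  rw [Finset.sup_congr rfl fun i _ => this i]
  exact Finset.sup_const (univ_nonempty_iff.2 ⟨⟨0, hn⟩⟩) 0

-- ### insertion lemmas (lower bound machinery)
variable {x y q : Fin n → R} {A M : Matrix (Fin n) (Fin n) R}

lemma cdot_insert (hx : Reg x) (q y : Fin n → R) : cdot q y ≤ cdot q x + cdot x y := by
  refine Finset.sup_le fun i _ => ?_
  have h0 : x i + tinv (x i) = 0 := self_add_tinv (hx i)
  have he : (tinv (q i) + x i) + (tinv (x i) + y i) = tinv (q i) + y i := by
    rw [add_assoc, ← add_assoc (x i), h0, zero_add]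
  rw [← he]
  exact add_le_add (le_cdot _ _ i) (le_cdot _ _ i)

lemma cdot_mulVec_split (hx : Reg x) (A : Matrix (Fin n) (Fin n) R) (y : Fin n → R) :
    cdot x (mulVec A y) ≤ cdot x (mulVec A x) + cdot x y := by
  refine Finset.sup_le fun i _ => ?_
  show tinv (x i) + mulVec A y i ≤ _
  rw [mulVec, add_finsup]
  refine Finset.sup_le fun j _ => ?_
  have h0 : x j + tinv (x j) = 0 := self_add_tinv (hx j)
  have he : (tinv (x i) + (A i j + x j)) + (tinv (x j) + y j) = tinv (x i) + (A i j + y j) := by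
    calc (tinv (x i) + (A i j + x j)) + (tinv (x j) + y j)
        = tinv (x i) + (A i j + ((x j + tinv (x j)) + y j)) := by abel
      _ = tinv (x i) + (A i j + y j) := by rw [h0, zero_add]
  rw [← he]
  refine add_le_add ?_ (le_cdot _ _ j)
  refine le_trans (add_le_add_right ?_ _) (le_cdot _ _ i)
  exact Finset.le_sup (f := fun j => A i j + x j) (mem_univ j)

lemma ttr_le_cdot (hx : Reg x) (M : Matrix (Fin n) (Fin n) R) :
    ttr M ≤ cdot x (mulVec M x) := by
  refine Finset.sup_le fun i _ => ?_
  have h0 : tinv (x i) + x i = 0 := tinv_add_self (hx i)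
  have he : M i i = tinv (x i) + (M i i + x i) := by
    calc M i i = (tinv (x i) + x i) + M i i := by rw [h0, zero_add]
      _ = tinv (x i) + (M i i + x i) := by abel
  rw [he]
  refine le_trans (add_le_add_right ?_ _) (le_cdot _ _ i)
  exact Finset.le_sup (f := fun j => M i j + x j) (mem_univ i)

lemma cdot_tpow_le (hx : Reg x) (A : Matrix (Fin n) (Fin n) R) (k : ℕ) (y : Fin n → R) :
    cdot x (mulVec (tpow A k) y) ≤ k • cdot x (mulVec A x) + cdot x y := by
  induction k generalizing y with
  | zero => rw [show tpow A 0 = tId from rfl, mulVec_tId, zero_nsmul, zero_add]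
  | succ k ih =>
      rw [show tpow A (k+1) = tmul A (tpow A k) from rfl, mulVec_tmul]
      calc cdot x (fun i => mulVec A (mulVec (tpow A k) y) i)
          ≤ cdot x (mulVec A x) + cdot x (mulVec (tpow A k) y) :=
            cdot_mulVec_split hx A _
        _ ≤ cdot x (mulVec A x) + (k • cdot x (mulVec A x) + cdot x y) :=
            add_le_add_right (ih y) _
        _ = (k+1) • cdot x (mulVec A x) + cdot x y := by rw [succ_nsmul]; abel
-- ### scalar trt conversions
lemma trt_le {a b : R} {m : ℕ} (hm : 1 ≤ m) (hb : b ≠ ⊥) (h : a ≤ m • b) : trt a m ≤ b := by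
  induction a using WithBot.recBotCoe with
  | bot => exact bot_le
  | coe r =>
      induction b using WithBot.recBotCoe with
      | bot => exact absurd rfl hb
      | coe s =>
          rw [coe_nsmul] at h
          have hr : r ≤ m • s := WithBot.coe_le_coe.1 h
          show ((r / (m:ℝ) : ℝ) : R) ≤ (s : R)
          rw [WithBot.coe_le_coe, div_le_iff₀ (by exact_mod_cast hm : (0:ℝ) < m)]
          rw [nsmul_eq_mul] at hr; linarith [hr]

lemma le_nsmul_of_trt_le {a b : R} {m : ℕ} (hm : 1 ≤ m) (h : trt a m ≤ b) : a ≤ m • b := by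
  induction a using WithBot.recBotCoe with
  | bot => exact bot_le
  | coe r =>
      induction b using WithBot.recBotCoe with
      | bot => exact absurd h (by simp [trt, WithBot.map_coe])
      | coe s =>
          rw [coe_nsmul, WithBot.coe_le_coe]
          have : r / (m:ℝ) ≤ s := by
            have := h; rw [show trt (r:R) m = ((r / (m:ℝ) : ℝ) : R) from rfl,
              WithBot.coe_le_coe] at this; exact this
          have hm' : (0:ℝ) < m := by exact_mod_cast hm
          rw [div_le_iff₀ hm'] at this
          rw [nsmul_eq_mul]; linarith

lemma nsmul_mono {a b : R} (m : ℕ) (h : a ≤ b) : m • a ≤ m • b := by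
  induction m with
  | zero => simp
  | succ k ih => rw [succ_nsmul, succ_nsmul]; exact add_le_add ih h

-- ### the lower bound
lemma lower_bound (hn : 0 < n) (A : Matrix (Fin n) (Fin n) R) (q : Fin n → R) (hq : Reg q)
    (p : Fin n → R) (c : R) (x : Fin n → R) (hx : Reg x) :
    specRad A ⊔ ((Finset.Icc 1 n).sup fun m =>
        trt (cdot q (mulVec (tpow A (m - 1)) p)) (m + 1)) ⊔ c ≤
      cdot x (mulVec A x) ⊔ cdot x p ⊔ cdot q x ⊔ c := by
  set θ := cdot x (mulVec A x) ⊔ cdot x p ⊔ cdot q x ⊔ c with hθ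
  have hqx : cdot q x ≤ θ := le_trans le_sup_right le_sup_left
  have hax : cdot x (mulVec A x) ≤ θ :=
    le_trans (le_trans le_sup_left le_sup_left) le_sup_left
  have hxp : cdot x p ≤ θ := le_trans (le_trans le_sup_right le_sup_left) le_sup_left
  have hθbot : θ ≠ ⊥ := by
    intro hb
    have h1 : cdot q x ≤ ⊥ := hb ▸ hqx
    obtain ⟨r, hr⟩ := reg_coe hq ⟨0, hn⟩
    obtain ⟨s, hs⟩ := reg_coe hx ⟨0, hn⟩
    have h2 : tinv (q ⟨0, hn⟩) + x ⟨0, hn⟩ ≤ ⊥ := le_trans (le_cdot _ _ _) h1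
    rw [hr, hs] at h2
    exact absurd (le_bot_iff.1 h2) (by simp [tinv, WithBot.map_coe, ← WithBot.coe_add])
  refine sup_le (sup_le ?_ ?_) le_sup_right
  · refine Finset.sup_le fun m hm => ?_
    obtain ⟨hm1, _⟩ := Finset.mem_Icc.1 hm
    refine trt_le hm1 hθbot ?_
    calc ttr (tpow A m) ≤ cdot x (mulVec (tpow A m) x) := ttr_le_cdot hx _
      _ ≤ m • cdot x (mulVec A x) + cdot x x := cdot_tpow_le hx A m x
      _ = m • cdot x (mulVec A x) := by rw [cdot_self hn hx, add_zero]
      _ ≤ m • θ := nsmul_mono m hax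
  · refine Finset.sup_le fun m hm => ?_
    obtain ⟨hm1, _⟩ := Finset.mem_Icc.1 hm
    refine trt_le (by omega) hθbot ?_
    calc cdot q (mulVec (tpow A (m-1)) p)
        ≤ cdot q x + cdot x (mulVec (tpow A (m-1)) p) := cdot_insert hx _ _
      _ ≤ θ + ((m-1) • cdot x (mulVec A x) + cdot x p) :=
          add_le_add hqx (cdot_tpow_le hx A (m-1) p)
      _ ≤ θ + ((m-1) • θ + θ) := add_le_add_right (add_le_add (nsmul_mono _ hax) hxp) _
      _ = (m+1) • θ := by
          have h2 : m - 1 + 2 = m + 1 := by omega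
          rw [← h2, add_nsmul, two_nsmul]; abel
-- ### walks
def wseq (B : Matrix (Fin n) (Fin n) R) : List (Fin n) → R
  | [] => 0
  | [_] => 0
  | a :: b :: t => B a b + wseq B (b :: t)

lemma wseq_cons_cons (B : Matrix (Fin n) (Fin n) R) (a b : Fin n) (t : List (Fin n)) :
    wseq B (a :: b :: t) = B a b + wseq B (b :: t) := rfl

lemma wseq_append (B : Matrix (Fin n) (Fin n) R) (u : List (Fin n)) (x : Fin n)
    (v : List (Fin n)) : wseq B (u ++ x :: v) = wseq B (u ++ [x]) + wseq B (x :: v) := by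
  induction u with
  | nil =>
      show wseq B (x :: v) = wseq B [x] + wseq B (x :: v)
      show wseq B (x :: v) = 0 + wseq B (x :: v)
      rw [zero_add]
  | cons a u ih =>
      cases u with
      | nil =>
          show wseq B (a :: x :: v) = wseq B [a, x] + wseq B (x :: v)
          rw [wseq_cons_cons, show wseq B [a, x] = B a x + wseq B [x] from rfl,
            show wseq B [x] = 0 from rfl, add_zero]
      | cons b u' =>
          show wseq B (a :: b :: (u' ++ x :: v)) = wseq B (a :: b :: (u' ++ [x])) + _
          rw [wseq_cons_cons, wseq_cons_cons]
          have := ih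
          simp only [List.cons_append] at this ⊢
          rw [this, add_assoc]

lemma getLast_append_cons {α : Type*} (u : List α) (x : α) (v : List α) (h) :
    (u ++ x :: v).getLast h = (x :: v).getLast (List.cons_ne_nil _ _) := by
  rw [List.getLast_append]; simp

lemma head_append_cons {α : Type*} (a : α) (u : List α) (x : α) (v : List α) (h) :
    ((a :: u) ++ x :: v).head h = a := by
  simp

lemma tpow_succ (B : Matrix (Fin n) (Fin n) R) (m : ℕ) (i j : Fin n) :
    tpow B (m + 1) i j = univ.sup fun k => B i k + tpow B m k j := rfl

lemma tpow_one (B : Matrix (Fin n) (Fin n) R) (i j : Fin n) : tpow B 1 i j = B i j := by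
  rw [tpow_succ]
  apply le_antisymm
  · refine Finset.sup_le fun k _ => ?_
    by_cases h : k = j
    · subst h; simp [tpow, tId]
    · simp [tpow, tId, h, WithBot.add_bot]
  · have := Finset.le_sup (f := fun k => B i k + tpow B 0 k j) (mem_univ j)
    simpa [tpow, tId] using this

lemma wseq_le_tpow (B : Matrix (Fin n) (Fin n) R) :
    ∀ (s : List (Fin n)) (hs : s ≠ []),
      wseq B s ≤ tpow B (s.length - 1) (s.head hs) (s.getLast hs) := by
  intro s
  induction s with
  | nil => intro hs; exact absurd rfl hs
  | cons a t ih =>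
      intro hs
      cases t with
      | nil => show (0:R) ≤ tpow B 0 a a; simp [tpow, tId]
      | cons b t' =>
          have hbt : (b :: t') ≠ [] := List.cons_ne_nil _ _
          rw [wseq_cons_cons]
          have h1 := ih hbt
          calc B a b + wseq B (b :: t')
              ≤ B a b + tpow B ((b :: t').length - 1) b ((b :: t').getLast hbt) :=
                add_le_add_right h1 _
            _ ≤ tpow B ((a :: b :: t').length - 1) a ((a :: b :: t').getLast hs) := by
                have hlast : (a :: b :: t').getLast hs = (b :: t').getLast hbt :=
                  List.getLast_cons hbt
                rw [hlast]
                show _ ≤ tpow B ((b :: t').length - 1 + 1) a _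
                rw [tpow_succ]
                exact Finset.le_sup
                  (f := fun k => B a k + tpow B ((b :: t').length - 1) k ((b::t').getLast hbt))
                  (mem_univ b)

lemma not_nodup_split {α : Type*} :
    ∀ (s : List α), ¬ s.Nodup → ∃ (a : List α) (x : α) (b c : List α), s = a ++ (x :: (b ++ (x :: c))) := by
  intro s
  induction s with
  | nil => intro h; exact absurd List.nodup_nil h
  | cons y t ih =>
      intro h
      by_cases hy : y ∈ t
      · obtain ⟨b, c, rfl⟩ := List.append_of_mem hy
        exact ⟨[], y, b, c, rfl⟩
      · have ht : ¬ t.Nodup := fun hnd => h (List.nodup_cons.2 ⟨hy, hnd⟩)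
        obtain ⟨a, x, b, c, rfl⟩ := ih ht
        exact ⟨y :: a, x, b, c, rfl⟩

lemma sup_cons_decomp {m : ℕ} (g : (Fin (m+1) → Fin n) → R) :
    (univ.sup fun k : Fin n => univ.sup fun f : Fin m → Fin n => g (Fin.cons k f)) =
      univ.sup g := by
  apply le_antisymm
  · exact Finset.sup_le fun k _ => Finset.sup_le fun f _ => Finset.le_sup (mem_univ _)
  · refine Finset.sup_le fun h _ => ?_
    have hg : g h = g (Fin.cons (h 0) (Fin.tail h)) := by rw [Fin.cons_self_tail]
    rw [hg]
    exact le_trans (Finset.le_sup (f := fun f => g (Fin.cons (h 0) f)) (mem_univ (Fin.tail h)))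
      (Finset.le_sup (f := fun k => univ.sup fun f => g (Fin.cons k f)) (mem_univ (h 0)))

set_option maxHeartbeats 1000000 in
lemma tpow_eq_walks (B : Matrix (Fin n) (Fin n) R) :
    ∀ (m : ℕ) (i j : Fin n),
      tpow B (m + 1) i j =
        (univ : Finset (Fin m → Fin n)).sup fun f => wseq B (i :: (List.ofFn f ++ [j])) := by
  intro m
  induction m with
  | zero =>
      intro i j
      rw [tpow_one]
      have h1 : ∀ f : Fin 0 → Fin n, wseq B (i :: (List.ofFn f ++ [j])) = B i j := by
        intro f
        rw [List.ofFn_zero]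
        show wseq B [i, j] = B i j
        rw [show wseq B [i, j] = B i j + wseq B [j] from rfl, show wseq B [j] = 0 from rfl,
          add_zero]
      rw [Finset.sup_congr rfl fun f _ => h1 f]
      exact (Finset.sup_const (univ_nonempty) _).symm
  | succ m ih =>
      intro i j
      rw [tpow_succ]
      calc (univ.sup fun k => B i k + tpow B (m + 1) k j)
          = univ.sup fun k => univ.sup fun f : Fin m → Fin n =>
              B i k + wseq B (k :: (List.ofFn f ++ [j])) := by
            refine Finset.sup_congr rfl fun k _ => ?_
            rw [ih k j, add_finsup]
        _ = univ.sup fun k => univ.sup fun f : Fin m → Fin n =>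
              wseq B (i :: k :: (List.ofFn f ++ [j])) :=
            Finset.sup_congr rfl fun k _ => Finset.sup_congr rfl fun f _ =>
              (wseq_cons_cons B i k (List.ofFn f ++ [j])).symm
        _ = univ.sup fun k => univ.sup fun f : Fin m → Fin n =>
              wseq B (i :: (List.ofFn (Fin.cons k f : Fin (m+1) → Fin n) ++ [j])) := by
            refine Finset.sup_congr rfl fun k _ => Finset.sup_congr rfl fun f _ => ?_
            have hof : List.ofFn (Fin.cons k f : Fin (m+1) → Fin n) = k :: List.ofFn f := by
              rw [List.ofFn_succ]
              simp
            rw [hof]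
            rfl
        _ = (univ : Finset (Fin (m+1) → Fin n)).sup
              fun f => wseq B (i :: (List.ofFn f ++ [j])) :=
            sup_cons_decomp (fun h => wseq B (i :: (List.ofFn h ++ [j])))
-- ### absorption: walks of length ≤ n+1 are bounded by the Kleene star
lemma tId_le_kstar (hn : 0 < n) (B : Matrix (Fin n) (Fin n) R) (i j : Fin n) :
    tId i j ≤ kstar B i j :=
  Finset.le_sup (f := fun k => tpow B k i j) (Finset.mem_range.2 hn)

lemma wseq_le_kstar (hn : 0 < n) (B : Matrix (Fin n) (Fin n) R)
    (hBtr : ∀ m ∈ Finset.Icc 1 n, ttr (tpow B m) ≤ 0) :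
    ∀ (N : ℕ) (s : List (Fin n)) (hs : s ≠ []), s.length ≤ N → s.length ≤ n + 1 →
      wseq B s ≤ kstar B (s.head hs) (s.getLast hs) := by
  intro N
  induction N with
  | zero =>
      intro s hs h1 _
      have := List.length_pos_iff.2 hs
      omega
  | succ N ih =>
      intro s hs hsN hsn
      by_cases hlen : s.length ≤ n
      · refine le_trans (wseq_le_tpow B s hs) ?_
        refine Finset.le_sup (f := fun k => tpow B k (s.head hs) (s.getLast hs)) ?_
        rw [Finset.mem_range]
        have := List.length_pos_iff.2 hs
        omega
      · obtain ⟨a, x0, b, c, rfl⟩ := not_nodup_split s (fun hnd => by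
          have h2 := List.Nodup.length_le_card hnd
          rw [Fintype.card_fin] at h2
          omega)
        simp only [List.length_append, List.length_cons] at hsN hsn hlen
        have hx0 : (x0 :: (b ++ [x0])) ≠ [] := List.cons_ne_nil _ _
        have hcyc : wseq B (x0 :: (b ++ [x0])) ≤ 0 := by
          have h1 := wseq_le_tpow B (x0 :: (b ++ [x0])) hx0
          have hh : (x0 :: (b ++ [x0])).head hx0 = x0 := rfl
          have hl : (x0 :: (b ++ [x0])).getLast hx0 = x0 := by
            rw [List.getLast_cons (by simp)]
            exact List.getLast_concat
          have hL2 : (x0 :: (b ++ [x0])).length - 1 = b.length + 1 := by simp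
          rw [hh, hl, hL2] at h1
          refine le_trans h1 (le_trans (Finset.le_sup
            (f := fun i => tpow B (b.length+1) i i) (mem_univ x0)) ?_)
          exact hBtr (b.length+1) (Finset.mem_Icc.2 ⟨by omega, by omega⟩)
        have hws : wseq B (a ++ (x0 :: (b ++ (x0 :: c)))) ≤ wseq B (a ++ (x0 :: c)) := by
          calc wseq B (a ++ (x0 :: (b ++ (x0 :: c))))
              = wseq B ((a ++ (x0 :: b)) ++ (x0 :: c)) :=
                congrArg (wseq B) (by simp)
            _ = wseq B ((a ++ (x0 :: b)) ++ [x0]) + wseq B (x0 :: c) :=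
                wseq_append B (a ++ (x0 :: b)) x0 c
            _ = wseq B (a ++ (x0 :: (b ++ [x0]))) + wseq B (x0 :: c) := by
                rw [congrArg (wseq B) (show (a ++ (x0 :: b)) ++ [x0]
                  = a ++ (x0 :: (b ++ [x0])) by simp)]
            _ = (wseq B (a ++ [x0]) + wseq B (x0 :: (b ++ [x0]))) + wseq B (x0 :: c) := by
                rw [wseq_append B a x0 (b ++ [x0])]
            _ ≤ (wseq B (a ++ [x0]) + 0) + wseq B (x0 :: c) :=
                add_le_add_left (add_le_add_right hcyc _) _
            _ = wseq B (a ++ [x0]) + wseq B (x0 :: c) := by rw [add_zero]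
            _ = wseq B (a ++ (x0 :: c)) := (wseq_append B a x0 c).symm
        have hs' : (a ++ (x0 :: c)) ≠ [] := by simp
        have hhead : (a ++ (x0 :: c)).head hs'
            = (a ++ (x0 :: (b ++ (x0 :: c)))).head hs := by
          rw [List.head_append, List.head_append]
          cases a <;> simp
        have hlast : (a ++ (x0 :: c)).getLast hs'
            = (a ++ (x0 :: (b ++ (x0 :: c)))).getLast hs := by
          have e1 : (a ++ (x0 :: (b ++ (x0 :: c)))).getLast hs
              = ((a ++ (x0 :: b)) ++ (x0 :: c)).getLast (by simp) :=
            List.getLast_congr _ _ (by simp)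
          rw [e1, getLast_append_cons, getLast_append_cons]
        refine le_trans hws ?_
        rw [← hhead, ← hlast]
        refine ih (a ++ (x0 :: c)) hs' ?_ ?_ <;>
          · simp only [List.length_append, List.length_cons]
            omega

lemma tpow_le_kstar (hn : 0 < n) (B : Matrix (Fin n) (Fin n) R)
    (hBtr : ∀ m ∈ Finset.Icc 1 n, ttr (tpow B m) ≤ 0) {m : ℕ} (hm : m ≤ n) (i j : Fin n) :
    tpow B m i j ≤ kstar B i j := by
  cases m with
  | zero => exact tId_le_kstar hn B i j
  | succ m =>
      rw [tpow_eq_walks]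
      refine Finset.sup_le fun f _ => ?_
      have hsne : (i :: (List.ofFn f ++ [j])) ≠ [] := List.cons_ne_nil _ _
      have h1 := wseq_le_kstar hn B hBtr (n+1) (i :: (List.ofFn f ++ [j])) hsne
        (by simp; omega) (by simp; omega)
      have hh : (i :: (List.ofFn f ++ [j])).head hsne = i := rfl
      have hl : (i :: (List.ofFn f ++ [j])).getLast hsne = j := by
        rw [List.getLast_congr _ (by simp) (show i :: (List.ofFn f ++ [j])
          = (i :: List.ofFn f) ++ [j] by simp)]
        exact List.getLast_concat
      rw [hh, hl] at h1
      exact h1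
-- ### shifted matrix and kstar facts
lemma tpow_shift (t : R) (A : Matrix (Fin n) (Fin n) R) :
    ∀ (m : ℕ) (i j : Fin n),
      tpow (fun i j => t + A i j) m i j = m • t + tpow A m i j := by
  intro m
  induction m with
  | zero => intro i j; rw [zero_nsmul, zero_add]; rfl
  | succ m ih =>
      intro i j
      show (univ.sup fun k => (t + A i k) + tpow (fun i j => t + A i j) m k j) = _
      have h1 : ∀ k, (t + A i k) + tpow (fun i j => t + A i j) m k j
          = (m+1) • t + (A i k + tpow A m k j) := by
        intro k
        rw [ih k j, succ_nsmul]
        abel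
      rw [Finset.sup_congr rfl fun k _ => h1 k, ← add_finsup]
      rfl

lemma ttr_tpow_shift (t : R) (A : Matrix (Fin n) (Fin n) R) (m : ℕ) :
    ttr (tpow (fun i j => t + A i j) m) = m • t + ttr (tpow A m) := by
  unfold ttr
  rw [add_finsup]
  exact Finset.sup_congr rfl fun i _ => tpow_shift t A m i i

lemma shifted_tr_le (A : Matrix (Fin n) (Fin n) R) {μ : R} (hμ : μ ≠ ⊥)
    (hspec : specRad A ≤ μ) :
    ∀ m ∈ Finset.Icc 1 n, ttr (tpow (fun i j => tinv μ + A i j) m) ≤ 0 := by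
  intro m hm
  obtain ⟨hm1, _⟩ := Finset.mem_Icc.1 hm
  have h1 : trt (ttr (tpow A m)) m ≤ μ :=
    le_trans (Finset.le_sup (f := fun m => trt (ttr (tpow A m)) m) hm) hspec
  have h2 : ttr (tpow A m) ≤ m • μ := le_nsmul_of_trt_le hm1 h1
  calc ttr (tpow (fun i j => tinv μ + A i j) m)
      = m • tinv μ + ttr (tpow A m) := ttr_tpow_shift _ A m
    _ ≤ m • tinv μ + m • μ := add_le_add_right h2 _
    _ = m • (tinv μ + μ) := (nsmul_add _ _ m).symm
    _ = 0 := by rw [tinv_add_self hμ, smul_zero]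

lemma le_mulVec_kstar (hn : 0 < n) (B : Matrix (Fin n) (Fin n) R) (u : Fin n → R) (i : Fin n) :
    u i ≤ mulVec (kstar B) u i := by
  have h1 : (0:R) + u i ≤ kstar B i i + u i :=
    add_le_add_left (le_trans (le_of_eq (by simp [tId])) (tId_le_kstar hn B i i)) _
  rw [zero_add] at h1
  exact le_trans h1 (Finset.le_sup (f := fun j => kstar B i j + u j) (mem_univ i))

lemma mulVec_kstar_eq_sup (B : Matrix (Fin n) (Fin n) R) (u : Fin n → R) (i : Fin n) :
    mulVec (kstar B) u i = (Finset.range n).sup fun t => mulVec (tpow B t) u i := by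
  show (univ.sup fun j => ((Finset.range n).sup fun t => tpow B t i j) + u j) = _
  calc (univ.sup fun j => ((Finset.range n).sup fun t => tpow B t i j) + u j)
      = univ.sup fun j => (Finset.range n).sup fun t => tpow B t i j + u j := by
        exact Finset.sup_congr rfl fun j _ => finsup_add _ _ _
    _ = (Finset.range n).sup fun t => univ.sup fun j => tpow B t i j + u j :=
        Finset.sup_comm _ _ _

lemma mulVec_B_kstar_le (hn : 0 < n) (B : Matrix (Fin n) (Fin n) R)
    (hBtr : ∀ m ∈ Finset.Icc 1 n, ttr (tpow B m) ≤ 0) (u : Fin n → R) (i : Fin n) :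
    mulVec B (mulVec (kstar B) u) i ≤ mulVec (kstar B) u i := by
  show (univ.sup fun j => B i j + mulVec (kstar B) u j) ≤ _
  calc (univ.sup fun j => B i j + mulVec (kstar B) u j)
      = univ.sup fun j => (Finset.range n).sup fun t => B i j + mulVec (tpow B t) u j := by
        refine Finset.sup_congr rfl fun j _ => ?_
        rw [mulVec_kstar_eq_sup, add_finsup]
    _ = (Finset.range n).sup fun t => univ.sup fun j => B i j + mulVec (tpow B t) u j :=
        Finset.sup_comm _ _ _
    _ ≤ mulVec (kstar B) u i := by
        refine Finset.sup_le fun t ht => ?_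
        have h1 : (univ.sup fun j => B i j + mulVec (tpow B t) u j)
            = mulVec (tmul B (tpow B t)) u i := by
          rw [mulVec_tmul]; rfl
        rw [h1]
        have h3 : t + 1 ≤ n := Finset.mem_range.1 ht
        exact mulVec_monoM (fun a b' =>
          tpow_le_kstar hn B hBtr h3 a b') u i

lemma mulVec_kstar_fix (hn : 0 < n) (B : Matrix (Fin n) (Fin n) R) {x : Fin n → R}
    (hx : ∀ i, mulVec B x i ≤ x i) : mulVec (kstar B) x = x := by
  have hp : ∀ t i, mulVec (tpow B t) x i ≤ x i := by
    intro t
    induction t with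
    | zero =>
        intro i
        rw [show tpow B 0 = tId from rfl, mulVec_tId]
    | succ t ih =>
        intro i
        have h1 : mulVec (tpow B (t+1)) x i = mulVec B (mulVec (tpow B t) x) i := by
          rw [show tpow B (t+1) = tmul B (tpow B t) from rfl, mulVec_tmul]
        rw [h1]
        exact le_trans (mulVec_mono ih i) (hx i)
  funext i
  apply le_antisymm
  · rw [mulVec_kstar_eq_sup]
    exact Finset.sup_le fun t _ => hp t i
  · exact le_mulVec_kstar hn B x i
-- ### scalar shuffles
lemma tinv_ne_bot {a : R} (ha : a ≠ ⊥) : tinv a ≠ ⊥ := by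
  induction a using WithBot.recBotCoe with
  | bot => exact absurd rfl ha
  | coe r => simp [tinv, WithBot.map_coe]

lemma le_add_of_tinv_add_le {μ : R} (hμ : μ ≠ ⊥) {a b : R} (h : tinv μ + a ≤ b) :
    a ≤ μ + b := by
  have h2 := add_le_add_right h μ
  rwa [← add_assoc, self_add_tinv hμ, zero_add] at h2

lemma tinv_add_le_of_le_add {μ : R} (hμ : μ ≠ ⊥) {a b : R} (h : a ≤ μ + b) :
    tinv μ + a ≤ b := by
  have h2 := add_le_add_right h (tinv μ)
  rwa [← add_assoc, tinv_add_self hμ, zero_add] at h2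

lemma le_tinv_add_of_add_le {a : R} (ha : a ≠ ⊥) {b c : R} (h : a + b ≤ c) :
    b ≤ tinv a + c := by
  have h2 := add_le_add_right h (tinv a)
  rwa [← add_assoc, tinv_add_self ha, zero_add] at h2

end Aux

open Aux Finset

/-- unconstrained minimization of `x⁻ A x ⊕ x⁻ p ⊕ q⁻ x ⊕ c`. -/
theorem stmt_11 {n : ℕ} (A : Matrix (Fin n) (Fin n) (WithBot ℝ))
    (hlam : ⊥ < specRad A)
    (q : Fin n → WithBot ℝ) (hq : Reg q)
    (p : Fin n → WithBot ℝ) (c : WithBot ℝ)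
    (μ : WithBot ℝ)
    (hμ : μ = specRad A
        ⊔ ((Finset.Icc 1 n).sup fun m => trt (cdot q (mulVec (tpow A (m - 1)) p)) (m + 1))
        ⊔ c) :
    IsLeast {v | ∃ x : Fin n → WithBot ℝ, Reg x ∧
        cdot x (mulVec A x) ⊔ cdot x p ⊔ cdot q x ⊔ c = v} μ ∧
      ∀ x : Fin n → WithBot ℝ, Reg x →
        (cdot x (mulVec A x) ⊔ cdot x p ⊔ cdot q x ⊔ c = μ ↔
          ∃ u : Fin n → WithBot ℝ,
            x = mulVec (kstar fun i j => tinv μ + A i j) u ∧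
            ∀ j, tinv μ + p j ≤ u j ∧
              u j ≤ μ + tinv (Finset.univ.sup fun i =>
                tinv (q i) + kstar (fun a b => tinv μ + A a b) i j)) := by
  have hn : 0 < n := by
    rcases Nat.eq_zero_or_pos n with h | h
    · exfalso
      subst h
      have : specRad A = ⊥ := by
        unfold specRad
        rw [Finset.Icc_eq_empty (by omega), Finset.sup_empty]
      rw [this] at hlam
      exact lt_irrefl _ hlam
    · exact h
  have hspec : specRad A ≤ μ := by
    rw [hμ]; exact le_trans le_sup_left le_sup_left
  have hsupP : ∀ m ∈ Finset.Icc 1 n,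
      trt (cdot q (mulVec (tpow A (m - 1)) p)) (m + 1) ≤ μ := by
    intro m hm
    rw [hμ]
    exact le_trans (le_trans (Finset.le_sup
      (f := fun m => trt (cdot q (mulVec (tpow A (m - 1)) p)) (m + 1)) hm)
      le_sup_right) le_sup_left
  have hcμ : c ≤ μ := by rw [hμ]; exact le_sup_right
  have hμbot : μ ≠ ⊥ := by
    intro h
    rw [h] at hspec
    exact absurd (le_bot_iff.1 hspec) (ne_of_gt hlam)
  set B : Matrix (Fin n) (Fin n) (WithBot ℝ) := fun i j => tinv μ + A i j with hB
  have hBtr : ∀ m ∈ Finset.Icc 1 n, ttr (tpow B m) ≤ 0 :=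
    shifted_tr_le A hμbot hspec
  set g : Fin n → WithBot ℝ :=
    fun j => Finset.univ.sup fun i => tinv (q i) + kstar B i j with hg
  have hgbot : ∀ j, g j ≠ ⊥ := by
    intro j hbot
    have h1 : tinv (q j) + kstar B j j ≤ g j :=
      Finset.le_sup (f := fun i => tinv (q i) + kstar B i j) (mem_univ j)
    have h2 : (0:WithBot ℝ) ≤ kstar B j j :=
      le_trans (le_of_eq (by simp [tId])) (tId_le_kstar hn B j j)
    have h3 : tinv (q j) ≤ g j := by
      calc tinv (q j) = tinv (q j) + 0 := (add_zero _).symm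
        _ ≤ tinv (q j) + kstar B j j := add_le_add_right h2 _
        _ ≤ g j := h1
    rw [hbot, le_bot_iff] at h3
    exact tinv_ne_bot (hq j) h3
  -- the lower bound, for every regular x
  have hLB : ∀ x : Fin n → WithBot ℝ, Reg x →
      μ ≤ cdot x (mulVec A x) ⊔ cdot x p ⊔ cdot q x ⊔ c := by
    intro x hx
    rw [hμ]
    exact lower_bound hn A q hq p c x hx
  -- A-product vs B-product
  have hAB : ∀ (y : Fin n → WithBot ℝ) (i : Fin n),
      mulVec A y i = μ + mulVec B y i := by
    intro y i
    show _ = μ + univ.sup fun j => (tinv μ + A i j) + y j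
    rw [add_finsup]
    refine (Finset.sup_congr rfl fun j _ => ?_).symm
    calc μ + ((tinv μ + A i j) + y j) = (μ + tinv μ) + (A i j + y j) := by abel
      _ = A i j + y j := by rw [self_add_tinv hμbot, zero_add]
  -- key: any regular x of the prescribed form attains value μ
  have key : ∀ (x u : Fin n → WithBot ℝ), Reg x → x = mulVec (kstar B) u →
      (∀ j, tinv μ + p j ≤ u j ∧ u j ≤ μ + tinv (g j)) →
      cdot x (mulVec A x) ⊔ cdot x p ⊔ cdot q x ⊔ c = μ := by
    intro x u hx hxu hub
    refine le_antisymm ?_ (hLB x hx)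
    have hBxle : ∀ i, mulVec B x i ≤ x i := by
      intro i
      rw [hxu]
      exact mulVec_B_kstar_le hn B hBtr u i
    have hux : ∀ j, u j ≤ x j := by
      intro j; rw [hxu]; exact le_mulVec_kstar hn B u j
    refine sup_le (sup_le (sup_le ?_ ?_) ?_) hcμ
    · -- cdot x (mulVec A x) ≤ μ
      refine Finset.sup_le fun i _ => ?_
      have h1 : mulVec A x i ≤ μ + x i := by
        rw [hAB x i]
        exact add_le_add_right (hBxle i) _
      calc tinv (x i) + mulVec A x i ≤ tinv (x i) + (μ + x i) := add_le_add_right h1 _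
        _ = μ + (tinv (x i) + x i) := by abel
        _ = μ := by rw [tinv_add_self (hx i), add_zero]
    · -- cdot x p ≤ μ
      refine Finset.sup_le fun i _ => ?_
      have h1 : tinv μ + p i ≤ x i := le_trans (hub i).1 (hux i)
      have h2 : p i ≤ μ + x i := le_add_of_tinv_add_le hμbot h1
      calc tinv (x i) + p i ≤ tinv (x i) + (μ + x i) := add_le_add_right h2 _
        _ = μ + (tinv (x i) + x i) := by abel
        _ = μ := by rw [tinv_add_self (hx i), add_zero]
    · -- cdot q x ≤ μ
      refine Finset.sup_le fun i _ => ?_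
      rw [hxu]
      show tinv (q i) + univ.sup (fun j => kstar B i j + u j) ≤ μ
      rw [add_finsup]
      refine Finset.sup_le fun j _ => ?_
      have h1 : tinv (q i) + kstar B i j ≤ g j :=
        Finset.le_sup (f := fun i => tinv (q i) + kstar B i j) (mem_univ i)
      calc tinv (q i) + (kstar B i j + u j)
          = (tinv (q i) + kstar B i j) + u j := by abel
        _ ≤ g j + (μ + tinv (g j)) := add_le_add h1 (hub j).2
        _ = μ + (g j + tinv (g j)) := by abel
        _ = μ := by rw [self_add_tinv (hgbot j), add_zero]
  -- attainment witness
  have hwitness : ∃ x : Fin n → WithBot ℝ, Reg x ∧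
      cdot x (mulVec A x) ⊔ cdot x p ⊔ cdot q x ⊔ c = μ := by
    set u₀ : Fin n → WithBot ℝ := fun j => μ + tinv (g j) with hu₀
    set x₀ : Fin n → WithBot ℝ := mulVec (kstar B) u₀ with hx₀
    have hu₀bot : ∀ j, u₀ j ≠ ⊥ := by
      intro j
      obtain ⟨r, hr⟩ : ∃ r : ℝ, μ = (r : WithBot ℝ) := by
        induction μ using WithBot.recBotCoe with
        | bot => exact absurd rfl hμbot
        | coe r => exact ⟨r, rfl⟩
      obtain ⟨s, hs⟩ : ∃ s : ℝ, g j = (s : WithBot ℝ) := by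
        generalize hgj : g j = w
        induction w using WithBot.recBotCoe with
        | bot => exact absurd hgj (hgbot j)
        | coe s => exact ⟨s, rfl⟩
      show μ + tinv (g j) ≠ ⊥
      rw [hr, hs]
      simp [tinv, WithBot.map_coe, ← WithBot.coe_add]
    have hx₀reg : Reg x₀ := by
      intro i
      have h1 : u₀ i ≤ x₀ i := le_mulVec_kstar hn B u₀ i
      intro hbot
      rw [hbot, le_bot_iff] at h1
      exact hu₀bot i h1
    refine ⟨x₀, hx₀reg, key x₀ u₀ hx₀reg rfl ?_⟩
    intro j
    refine ⟨?_, le_refl _⟩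
    -- tinv μ + p j ≤ μ + tinv (g j)
    have hgp : g j + p j ≤ μ + μ := by
      rw [hg]
      show (univ.sup fun i => tinv (q i) + kstar B i j) + p j ≤ μ + μ
      rw [finsup_add]
      refine Finset.sup_le fun i _ => ?_
      show (tinv (q i) + kstar B i j) + p j ≤ μ + μ
      have hks : kstar B i j = (Finset.range n).sup fun t => tpow B t i j := rfl
      calc (tinv (q i) + kstar B i j) + p j
          = (Finset.range n).sup fun t => (tinv (q i) + tpow B t i j) + p j := by
            rw [hks, add_finsup, finsup_add]
        _ ≤ μ + μ := by
            refine Finset.sup_le fun t ht => ?_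
            have htn : t + 1 ≤ n := Finset.mem_range.1 ht
            have h2 : trt (cdot q (mulVec (tpow A (t + 1 - 1)) p)) (t + 1 + 1) ≤ μ :=
              hsupP (t+1) (Finset.mem_Icc.2 ⟨by omega, htn⟩)
            have h3 : cdot q (mulVec (tpow A t) p) ≤ (t + 2) • μ := by
              have := le_nsmul_of_trt_le (by omega) h2
              simpa using this
            have h4 : tinv (q i) + (tpow A t i j + p j) ≤ (t + 2) • μ := by
              refine le_trans ?_ h3
              refine le_trans (add_le_add_right (Finset.le_sup
                (f := fun k => tpow A t i k + p k) (mem_univ j)) _) ?_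
              exact le_cdot q (mulVec (tpow A t) p) i
            calc (tinv (q i) + tpow B t i j) + p j
                = t • tinv μ + (tinv (q i) + (tpow A t i j + p j)) := by
                  rw [hB]
                  rw [tpow_shift (tinv μ) A t i j]
                  abel
              _ ≤ t • tinv μ + (t + 2) • μ := add_le_add_right h4 _
              _ = t • (tinv μ + μ) + (μ + μ) := by
                  rw [show t + 2 = t + 2 from rfl, add_nsmul, two_nsmul, nsmul_add]
                  abel
              _ = μ + μ := by rw [tinv_add_self hμbot, smul_zero, zero_add]
    have h5 : p j ≤ tinv (g j) + (μ + μ) := le_tinv_add_of_add_le (hgbot j) hgp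
    calc tinv μ + p j ≤ tinv μ + (tinv (g j) + (μ + μ)) := add_le_add_right h5 _
      _ = (tinv μ + μ) + (μ + tinv (g j)) := by abel
      _ = μ + tinv (g j) := by rw [tinv_add_self hμbot, zero_add]
  constructor
  · constructor
    · exact hwitness
    · rintro v ⟨x, hx, rfl⟩
      exact hLB x hx
  · intro x hx
    constructor
    · -- forward: minimizer has the prescribed form
      intro hθ
      have h1 : cdot x (mulVec A x) ≤ μ := by
        rw [← hθ]
        exact le_trans (le_trans le_sup_left le_sup_left) le_sup_left
      have h2 : cdot x p ≤ μ := by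
        rw [← hθ]
        exact le_trans (le_trans le_sup_right le_sup_left) le_sup_left
      have h3 : cdot q x ≤ μ := by
        rw [← hθ]
        exact le_trans le_sup_right le_sup_left
      have hBx : ∀ i, mulVec B x i ≤ x i := by
        intro i
        show univ.sup (fun j => (tinv μ + A i j) + x j) ≤ x i
        refine Finset.sup_le fun j _ => ?_
        have h4 : tinv (x i) + (A i j + x j) ≤ μ := by
          refine le_trans ?_ h1
          refine le_trans (add_le_add_right (Finset.le_sup
            (f := fun k => A i k + x k) (mem_univ j)) _) ?_
          exact le_cdot x (mulVec A x) i
        have h5 : A i j + x j ≤ x i + μ := by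
          have h6 := add_le_add_right h4 (x i)
          rwa [← add_assoc, self_add_tinv (hx i), zero_add] at h6
        calc (tinv μ + A i j) + x j = tinv μ + (A i j + x j) := by abel
          _ ≤ tinv μ + (x i + μ) := add_le_add_right h5 _
          _ = x i + (tinv μ + μ) := by abel
          _ = x i := by rw [tinv_add_self hμbot, add_zero]
      have hfix : mulVec (kstar B) x = x := mulVec_kstar_fix hn B hBx
      refine ⟨x, hfix.symm, fun j => ⟨?_, ?_⟩⟩
      · -- tinv μ + p j ≤ x j
        have h4 : tinv (x j) + p j ≤ μ :=
          le_trans (le_cdot x p j) h2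
        have h5 : p j ≤ x j + μ := by
          have h6 := add_le_add_right h4 (x j)
          rwa [← add_assoc, self_add_tinv (hx j), zero_add] at h6
        calc tinv μ + p j ≤ tinv μ + (x j + μ) := add_le_add_right h5 _
          _ = x j + (tinv μ + μ) := by abel
          _ = x j := by rw [tinv_add_self hμbot, add_zero]
      · -- x j ≤ μ + tinv (g j)
        have hgx : g j + x j ≤ μ := by
          rw [hg]
          show (univ.sup fun i => tinv (q i) + kstar B i j) + x j ≤ μ
          rw [finsup_add]
          refine Finset.sup_le fun i _ => ?_
          have h4 : kstar B i j + x j ≤ x i := by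
            refine le_trans ?_ (le_of_eq (congrFun hfix i))
            exact Finset.le_sup (f := fun k => kstar B i k + x k) (mem_univ j)
          calc (tinv (q i) + kstar B i j) + x j
              = tinv (q i) + (kstar B i j + x j) := by abel
            _ ≤ tinv (q i) + x i := add_le_add_right h4 _
            _ ≤ cdot q x := le_cdot q x i
            _ ≤ μ := h3
        have h5 : x j ≤ tinv (g j) + μ := le_tinv_add_of_add_le (hgbot j) hgx
        rw [add_comm] at h5
        exact h5
    · -- backward
      rintro ⟨u, hxu, hub⟩
      exact key x u hx hxu fun j => hub j
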